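/- Let X be a real Hilbert space, A : D(A) → X a densely defined operator, P ∈ L(X) self-adjoint and coercive (⟨Px, x⟩ ≥ p‖x‖² with p > 0), and μ > 0 such that ⟨A x, P x⟩ ≤ -μ‖x‖² for all x ∈ D(A). If A generates a C₀-semigroup {e^{tA}}, then {e^{tA}} is exponentially stable: there exist M ≥ 1, ω > 0 with ‖e^{tA}‖ ≤ M e^{-ωt}. -/

import Mathlib

open RealInnerProductSpace

theorem lyapunov_inequality_exponential_stability
    {X : Type*} [NormedAddCommGroup X] [InnerProductSpace ℝ X] [CompleteSpace X]
    -- densely defined operator A with domain D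
    (D : Submodule ℝ X) (hD : Dense (D : Set X)) (A : D →ₗ[ℝ] X)
    -- P self-adjoint coercive
    (P : X →L[ℝ] X) (hPsa : ContinuousLinearMap.adjoint P = P)
    (p : ℝ) (hp : 0 < p) (hPcoer : ∀ x : X, ⟪P x, x⟫ ≥ p * ‖x‖ ^ 2)
    -- the dissipativity inequality
    (μ : ℝ) (hμ : 0 < μ)
    (hA : ∀ x : D, ⟪A x, P (x : X)⟫ ≤ -μ * ‖(x : X)‖ ^ 2)
    -- A generates a C₀-semigroup
    (eA : ℝ → X →L[ℝ] X)
    (heA0 : eA 0 = ContinuousLinearMap.id ℝ X)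
    (heAsg : ∀ s ≥ 0, ∀ t ≥ 0, eA (s + t) = (eA s).comp (eA t))
    (hTcont : ∀ x : X, Continuous fun t => eA t x)
    (hgen : ∀ (x : D) (t : ℝ), 0 ≤ t →
      HasDerivAt (fun s => eA s (x : X)) (eA t (A x)) t)
    (hinv : ∀ (x : D) (t : ℝ), 0 ≤ t → (eA t (x : X)) ∈ D) :
    ∃ M ≥ (1 : ℝ), ∃ ω > (0 : ℝ), ∀ t ≥ 0, ‖eA t‖ ≤ M * Real.exp (-ω * t) := by
  classical
  set c : ℝ := max ‖P‖ 1 with hc_def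
  have hc1 : (1:ℝ) ≤ c := le_max_right _ _
  have hc0 : (0:ℝ) < c := lt_of_lt_of_le one_pos hc1
  set ω : ℝ := μ / c with hω_def
  have hω : 0 < ω := div_pos hμ hc0
  -- P is symmetric
  have hPsym : ∀ a b : X, ⟪P a, b⟫ = ⟪a, P b⟫ := by
    intro a b
    conv_lhs => rw [← hPsa]
    exact ContinuousLinearMap.adjoint_inner_left P b a
  -- bound on the quadratic form
  have hfub : ∀ v : X, ⟪P v, v⟫ ≤ c * ‖v‖ ^ 2 := by
    intro v
    calc ⟪P v, v⟫ ≤ ‖P v‖ * ‖v‖ := real_inner_le_norm _ _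
      _ ≤ (‖P‖ * ‖v‖) * ‖v‖ := by
          exact mul_le_mul_of_nonneg_right (P.le_opNorm v) (norm_nonneg _)
      _ ≤ (c * ‖v‖) * ‖v‖ := by
          have h : ‖P‖ ≤ c := le_max_left _ _
          gcongr
      _ = c * ‖v‖ ^ 2 := by ring
  -- commutation : A (eA t x) = eA t (A x)
  have hcomm : ∀ (x : D) (t : ℝ) (ht : 0 ≤ t),
      A ⟨eA t (x:X), hinv x t ht⟩ = eA t (A x) := by
    intro x t ht
    set y : D := ⟨eA t (x:X), hinv x t ht⟩ with hy
    have h1 : HasDerivAt (fun h => eA h (y:X)) (A y) 0 := by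
      have := hgen y 0 le_rfl
      simpa [heA0] using this
    have h2 : HasDerivAt (fun h : ℝ => eA (t + h) (x:X)) (eA t (A x)) 0 := by
      have hshift : HasDerivAt (fun h : ℝ => t + h) 1 0 := by
        simpa using (hasDerivAt_id (0:ℝ)).const_add t
      have := (hgen x (t + 0) (by simpa using ht)).scomp 0 hshift
      simpa [Function.comp_def] using this
    have hagree : ∀ h ∈ Set.Ici (0:ℝ), eA (t + h) (x:X) = eA h (y:X) := by
      intro h hh
      have := heAsg h hh t ht
      rw [add_comm t h, this]
      rfl
    have hw1 : HasDerivWithinAt (fun h : ℝ => eA (t + h) (x:X)) (A y) (Set.Ici 0) 0 :=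
      (h1.hasDerivWithinAt).congr hagree (hagree 0 Set.self_mem_Ici)
    exact (uniqueDiffOn_Ici 0 0 Set.self_mem_Ici).eq_deriv _ hw1 h2.hasDerivWithinAt
  -- the key trajectory estimate on D
  have hkey : ∀ (x : D) (t : ℝ), 0 ≤ t →
      ‖eA t (x:X)‖ ≤ (Real.sqrt (c / p) * Real.exp (-ω * t)) * ‖(x:X)‖ := by
    intro x t ht
    set u : ℝ → X := fun s => eA s (x:X) with hu_def
    set f : ℝ → ℝ := fun s => ⟪P (u s), u s⟫ with hf_def
    set g : ℝ → ℝ := fun s => f s * Real.exp (2 * ω * s) with hg_def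
    have hucont : Continuous u := hTcont (x:X)
    have hfcont : Continuous f := by
      exact (P.continuous.comp hucont).inner hucont
    -- derivative bound
    have hg' : ∀ s : ℝ, 0 ≤ s →
        HasDerivAt g ((⟪P (u s), eA s (A x)⟫ + ⟪P (eA s (A x)), u s⟫) * Real.exp (2*ω*s)
          + f s * (2 * ω * Real.exp (2*ω*s))) s := by
      intro s hs
      have hu' : HasDerivAt u (eA s (A x)) s := hgen x s hs
      have hPu' : HasDerivAt (fun r => P (u r)) (P (eA s (A x))) s :=
        P.hasFDerivAt.comp_hasDerivAt s hu'
      have hf' : HasDerivAt f (⟪P (u s), eA s (A x)⟫ + ⟪P (eA s (A x)), u s⟫) s :=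
        HasDerivAt.inner ℝ hPu' hu'
      have hlin : HasDerivAt (fun r : ℝ => 2*ω*r) (2*ω) s := by
        simpa using (hasDerivAt_id s).const_mul (2*ω)
      have hexp : HasDerivAt (fun r : ℝ => Real.exp (2*ω*r)) (2 * ω * Real.exp (2*ω*s)) s := by
        have := hlin.exp
        simpa [mul_comm] using this
      exact hf'.mul hexp
    have hg'le : ∀ s : ℝ, 0 ≤ s →
        (⟪P (u s), eA s (A x)⟫ + ⟪P (eA s (A x)), u s⟫) * Real.exp (2*ω*s)
          + f s * (2 * ω * Real.exp (2*ω*s)) ≤ 0 := by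
      intro s hs
      set y : D := ⟨u s, hinv x s hs⟩ with hy
      have hAy : eA s (A x) = A y := (hcomm x s hs).symm
      have hinner : ⟪P (u s), eA s (A x)⟫ + ⟪P (eA s (A x)), u s⟫
          = 2 * ⟪A y, P (u s)⟫ := by
        rw [hAy, hPsym ((A y : X)) (u s), real_inner_comm (P (u s)) ((A y : X))]
        ring
      have h1 : ⟪A y, P (u s)⟫ ≤ -μ * ‖u s‖ ^ 2 := hA y
      have h2 : f s ≤ c * ‖u s‖ ^ 2 := hfub (u s)
      have hexp_pos : 0 < Real.exp (2*ω*s) := Real.exp_pos _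
      have key : (2 * ⟪A y, P (u s)⟫) + f s * (2 * ω) ≤ 0 := by
        have : f s * (2 * ω) ≤ 2 * μ * ‖u s‖ ^ 2 := by
          have := mul_le_mul_of_nonneg_right h2 (le_of_lt (by positivity : (0:ℝ) < 2 * ω))
          calc f s * (2 * ω) ≤ c * ‖u s‖ ^ 2 * (2 * ω) := this
            _ = 2 * μ * ‖u s‖ ^ 2 := by
                field_simp [hω_def]
                rw [hω_def]; field_simp
        nlinarith
      rw [hinner]
      calc 2 * ⟪A y, P (u s)⟫ * Real.exp (2*ω*s) + f s * (2 * ω * Real.exp (2*ω*s))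
          = ((2 * ⟪A y, P (u s)⟫) + f s * (2 * ω)) * Real.exp (2*ω*s) := by ring
        _ ≤ 0 * Real.exp (2*ω*s) := by
            exact mul_le_mul_of_nonneg_right key hexp_pos.le
        _ = 0 := by ring
    -- g is antitone on Ici 0
    have hganti : AntitoneOn g (Set.Ici (0:ℝ)) := by
      apply antitoneOn_of_deriv_nonpos (convex_Ici 0)
      · exact (hfcont.mul (Real.continuous_exp.comp (continuous_const.mul continuous_id))).continuousOn
      · intro s hs
        rw [interior_Ici] at hs
        exact (hg' s (le_of_lt hs)).differentiableAt.differentiableWithinAt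
      · intro s hs
        rw [interior_Ici] at hs
        rw [(hg' s (le_of_lt hs)).deriv]
        exact hg'le s (le_of_lt hs)
    have hgt : g t ≤ g 0 := hganti (Set.self_mem_Ici) ht ht
    have hg0 : g 0 = f 0 := by simp [hg_def]
    have hf0 : f 0 ≤ c * ‖(x:X)‖ ^ 2 := by
      have : u 0 = (x:X) := by simp [hu_def, heA0]
      rw [hf_def]; simp only; rw [this]; exact hfub _
    have hflb : p * ‖u t‖ ^ 2 ≤ f t := hPcoer (u t)
    -- combine: p ‖u t‖² * exp(2ωt) ≤ c ‖x‖²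
    have hmain : p * ‖u t‖ ^ 2 * Real.exp (2*ω*t) ≤ c * ‖(x:X)‖ ^ 2 := by
      have := hgt
      rw [hg0] at this
      have h3 : f t * Real.exp (2*ω*t) ≤ c * ‖(x:X)‖ ^ 2 := le_trans this hf0
      have h4 : p * ‖u t‖ ^ 2 * Real.exp (2*ω*t) ≤ f t * Real.exp (2*ω*t) :=
        mul_le_mul_of_nonneg_right hflb (Real.exp_pos _).le
      linarith
    -- conclude
    have hE : (0:ℝ) < Real.exp (2*ω*t) := Real.exp_pos _
    have hsq : ‖u t‖ ^ 2 ≤ ((Real.sqrt (c / p) * Real.exp (-ω * t)) * ‖(x:X)‖) ^ 2 := by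
      have h1 : ‖u t‖ ^ 2 ≤ c * ‖(x:X)‖ ^ 2 / (p * Real.exp (2*ω*t)) := by
        rw [le_div_iff₀ (by positivity)]
        nlinarith [hmain]
      have hsqrt : (Real.sqrt (c/p)) ^ 2 = c / p := Real.sq_sqrt (by positivity)
      have hexpinv : (Real.exp (-ω*t)) ^ 2 = (Real.exp (2*ω*t))⁻¹ := by
        rw [sq, ← Real.exp_add, ← Real.exp_neg]
        congr 1
        ring
      have h2 : ((Real.sqrt (c / p) * Real.exp (-ω * t)) * ‖(x:X)‖) ^ 2
          = c * ‖(x:X)‖ ^ 2 / (p * Real.exp (2*ω*t)) := by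
        rw [mul_pow, mul_pow, hsqrt, hexpinv]
        field_simp
      rw [h2]
      exact h1
    have h5 : (0:ℝ) ≤ (Real.sqrt (c / p) * Real.exp (-ω * t)) * ‖(x:X)‖ := by positivity
    calc ‖eA t (x:X)‖ = ‖u t‖ := rfl
      _ ≤ (Real.sqrt (c / p) * Real.exp (-ω * t)) * ‖(x:X)‖ := by
          have := Real.sqrt_le_sqrt hsq
          rwa [Real.sqrt_sq (norm_nonneg _), Real.sqrt_sq h5] at this
  -- extend to all of X by density
  have hall : ∀ (t : ℝ), 0 ≤ t → ∀ y : X,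
      ‖eA t y‖ ≤ (Real.sqrt (c / p) * Real.exp (-ω * t)) * ‖y‖ := by
    intro t ht y
    set K := Real.sqrt (c / p) * Real.exp (-ω * t) with hK
    have hclosed : IsClosed {z : X | ‖eA t z‖ ≤ K * ‖z‖} := by
      apply isClosed_le
      · exact (eA t).continuous.norm
      · exact continuous_const.mul continuous_norm
    have hsub : (D : Set X) ⊆ {z : X | ‖eA t z‖ ≤ K * ‖z‖} := by
      intro z hz
      exact hkey ⟨z, hz⟩ t ht
    have : (Set.univ : Set X) ⊆ {z : X | ‖eA t z‖ ≤ K * ‖z‖} := by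
      rw [← hclosed.closure_eq]
      calc (Set.univ : Set X) = closure (D : Set X) := hD.closure_eq.symm
        _ ⊆ closure {z : X | ‖eA t z‖ ≤ K * ‖z‖} := closure_mono hsub
    exact this (Set.mem_univ y)
  -- finish
  refine ⟨max 1 (Real.sqrt (c / p)), le_max_left _ _, ω, hω, ?_⟩
  intro t ht
  apply ContinuousLinearMap.opNorm_le_bound
  · positivity
  · intro y
    calc ‖eA t y‖ ≤ (Real.sqrt (c / p) * Real.exp (-ω * t)) * ‖y‖ := hall t ht y
      _ ≤ max 1 (Real.sqrt (c / p)) * Real.exp (-ω * t) * ‖y‖ := by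
          have h1 : Real.sqrt (c / p) ≤ max 1 (Real.sqrt (c / p)) := le_max_right _ _
          gcongr
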